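/- Let H be a real Hilbert space, let D ⊆ H be a dictionary such that the open ball B(0, r) is contained in conv(D′) for some r > 0, and let f : H → ℝ be L-smooth of order ℓ > 1 (for some L > 0), convex, and coercive. Fix κ ≥ 1, η > 0, τ > 1 and let (x_t)_{t∈ℕ}, (φ_t)_{t∈ℕ} be a BMP trace with parameters (κ, η, τ) for f and D. Then f attains its minimum on H, and there exists a constant A > 0 (depending on f, D, r, κ, η, τ, and the trace) such that for every ε > 0 and every integer t ≥ A·(1 + ε^{−1/(ℓ−1)}), one has f(x_t) − min_H f ≤ ε. -/

import Mathlib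

open RealInnerProductSpace Pointwise

section aux
variable {H : Type*} [NormedAddCommGroup H] [InnerProductSpace ℝ H] [CompleteSpace H]

/-- Gradient inequality for convex differentiable functions. -/
lemma bmp_conv_grad (f : H → ℝ) (f' : H → H) (hdiff : ∀ z, HasGradientAt f (f' z) z)
    (hconv : ConvexOn ℝ Set.univ f) (z y : H) :
    f z + ⟪f' z, y - z⟫ ≤ f y := by
  have hline : HasDerivAt (fun θ : ℝ => z + θ • (y - z)) (y - z) 0 := by
    simpa using ((hasDerivAt_id (0:ℝ)).smul_const (y - z)).const_add z
  have hF : HasDerivAt (fun θ : ℝ => f (z + θ • (y - z))) ⟪f' z, y - z⟫ 0 := by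
    have h0 : z + (0:ℝ) • (y - z) = z := by simp
    have := (h0 ▸ (hdiff z)).hasFDerivAt.comp_hasDerivAt 0 hline
    simp [InnerProductSpace.toDual_apply_apply] at this
    exact this
  have hslope := hasDerivAt_iff_tendsto_slope.1 hF
  have hslope' : Filter.Tendsto (slope (fun θ : ℝ => f (z + θ • (y - z))) 0)
      (nhdsWithin 0 (Set.Ioi 0)) (nhds ⟪f' z, y - z⟫) :=
    hslope.mono_left (nhdsWithin_mono 0 (fun θ hθ => ne_of_gt hθ))
  have hub : ∀ᶠ θ in nhdsWithin (0:ℝ) (Set.Ioi 0),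
      slope (fun θ : ℝ => f (z + θ • (y - z))) 0 θ ≤ f y - f z := by
    filter_upwards [Ioc_mem_nhdsGT_of_mem (Set.mem_Ico.2 ⟨le_refl (0:ℝ), one_pos⟩)]
      with θ hθ
    obtain ⟨hθ0, hθ1⟩ := hθ
    have hcomb : z + θ • (y - z) = (1 - θ) • z + θ • y := by
      rw [smul_sub, sub_smul, one_smul]; abel
    have hcv := hconv.2 (Set.mem_univ z) (Set.mem_univ y)
      (by linarith : (0:ℝ) ≤ 1 - θ) (le_of_lt hθ0) (by ring)
    have : f (z + θ • (y - z)) ≤ (1 - θ) * f z + θ * f y := by rw [hcomb]; exact hcv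
    have hs : slope (fun θ : ℝ => f (z + θ • (y - z))) 0 θ
        = (f (z + θ • (y - z)) - f z) / θ := by
      simp [slope_def_field]
    rw [hs, div_le_iff₀ hθ0]
    calc f (z + θ • (y - z)) - f z ≤ (1 - θ) * f z + θ * f y - f z := by linarith
      _ = (f y - f z) * θ := by ring
  have := le_of_tendsto hslope' hub
  linarith


/-- Dual certificate implies gradient norm bound. -/
lemma bmp_dual_norm {D : Set H} {r : ℝ} (hr : 0 < r)
    (hball : Metric.ball (0 : H) r ⊆ convexHull ℝ (D ∪ -D))
    (g : H) (c : ℝ) (hc : ∀ z ∈ convexHull ℝ (D ∪ -D), c ≤ ⟪g, z⟫) :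
    r / 2 * ‖g‖ ≤ -c := by
  rcases eq_or_ne g 0 with h0 | h0
  · have := hc 0 (hball (by simpa using hr))
    simp only [h0, inner_zero_left] at this
    simp [h0]; linarith
  · have hgpos : (0:ℝ) < ‖g‖ := norm_pos_iff.2 h0
    set z : H := -((r / 2 / ‖g‖) • g) with hz
    have hzn : ‖z‖ = r / 2 := by
      rw [hz, norm_neg, norm_smul, Real.norm_eq_abs, abs_of_pos (by positivity)]
      field_simp
    have hzb : z ∈ Metric.ball (0 : H) r := by
      simp only [Metric.mem_ball, dist_zero_right, hzn]; linarith
    have := hc z (hball hzb)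
    rw [hz, inner_neg_right, real_inner_smul_right, real_inner_self_eq_norm_sq] at this
    have h2 : r / 2 / ‖g‖ * ‖g‖ ^ 2 = r / 2 * ‖g‖ := by
      field_simp
    rw [h2] at this
    linarith


/-- A coercive convex smooth function is bounded below. -/
lemma bmp_bddBelow (f : H → ℝ) (f' : H → H)
    (L ℓ : ℝ) (hL : 0 < L) (hℓ : 1 < ℓ)
    (hsmooth : ∀ z y : H, f y - f z - ⟪f' z, y - z⟫ ≤ L / ℓ * ‖y - z‖ ^ ℓ)
    (hconv : ConvexOn ℝ Set.univ f)
    (hcoer : ∀ M : ℝ, ∃ R : ℝ, 0 < R ∧ ∀ z : H, R ≤ ‖z‖ → M ≤ f z) :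
    ∃ B₀ : ℝ, ∀ z, B₀ ≤ f z := by
  obtain ⟨R, hRpos, hR⟩ := hcoer (f 0)
  set U : ℝ := f 0 + ‖f' 0‖ * R + L / ℓ * R ^ ℓ with hU
  refine ⟨min (f 0) (2 * f 0 - U), fun z => ?_⟩
  rcases le_or_gt R ‖z‖ with h | h
  · exact le_trans (min_le_left _ _) (hR z h)
  · -- upper bound on f (-z)
    have hub : f (-z) ≤ U := by
      have h1 := hsmooth 0 (-z)
      have h2 : ⟪f' 0, -z - 0⟫ ≤ ‖f' 0‖ * R := by
        calc ⟪f' 0, -z - 0⟫ ≤ ‖f' 0‖ * ‖-z - 0‖ := real_inner_le_norm _ _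
          _ ≤ ‖f' 0‖ * R := by
              apply mul_le_mul_of_nonneg_left _ (norm_nonneg _)
              simpa using le_of_lt h
      have h3 : ‖-z - 0‖ ^ ℓ ≤ R ^ ℓ := by
        apply Real.rpow_le_rpow (norm_nonneg _) _ (by linarith)
        simpa using le_of_lt h
      have h4 : L / ℓ * ‖-z - 0‖ ^ ℓ ≤ L / ℓ * R ^ ℓ :=
        mul_le_mul_of_nonneg_left h3 (le_of_lt (div_pos hL (by linarith)))
      rw [hU]; linarith
    have hmid : f 0 ≤ f z / 2 + f (-z) / 2 := by
      have := hconv.2 (Set.mem_univ z) (Set.mem_univ (-z))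
        (by norm_num : (0:ℝ) ≤ 1/2) (by norm_num : (0:ℝ) ≤ 1/2) (by norm_num)
      have hzz : (1/2 : ℝ) • z + (1/2 : ℝ) • (-z) = 0 := by
        rw [smul_neg]; abel
      rw [hzz] at this
      simp only [smul_eq_mul] at this
      linarith
    have : 2 * f 0 - U ≤ f z := by linarith
    exact le_trans (min_le_right _ _) this

/-- A strongly convex perturbation of `f` attains its minimum. -/
lemma bmp_strong_min (f : H → ℝ) (hfc : Continuous f)
    (hconv : ConvexOn ℝ Set.univ f) (B₀ : ℝ) (hB₀ : ∀ z, B₀ ≤ f z)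
    (a : ℝ) (ha : 0 < a) :
    ∃ y : H, ∀ z : H, f y + a * ‖y‖ ^ 2 ≤ f z + a * ‖z‖ ^ 2 := by
  set g : H → ℝ := fun z => f z + a * ‖z‖ ^ 2 with hg
  have hgb : ∀ z, B₀ ≤ g z := fun z => le_trans (hB₀ z) (by
    have : (0:ℝ) ≤ a * ‖z‖ ^ 2 := by positivity
    simp only [hg]; linarith)
  have hne : (Set.range g).Nonempty := ⟨g 0, 0, rfl⟩
  have hbdd : BddBelow (Set.range g) := ⟨B₀, by rintro _ ⟨z, rfl⟩; exact hgb z⟩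
  set m : ℝ := sInf (Set.range g) with hm
  have hmle : ∀ z, m ≤ g z := fun z => csInf_le hbdd ⟨z, rfl⟩
  -- strong convexity key inequality
  have hkey : ∀ u v : H, g ((1/2 : ℝ) • u + (1/2 : ℝ) • v) ≤
      g u / 2 + g v / 2 - a / 4 * ‖u - v‖ ^ 2 := by
    intro u v
    have hf := hconv.2 (Set.mem_univ u) (Set.mem_univ v)
      (by norm_num : (0:ℝ) ≤ 1/2) (by norm_num : (0:ℝ) ≤ 1/2) (by norm_num)
    simp only [smul_eq_mul] at hf
    have hpar : ‖(1/2 : ℝ) • u + (1/2 : ℝ) • v‖ ^ 2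
        = ‖u‖ ^ 2 / 2 + ‖v‖ ^ 2 / 2 - ‖u - v‖ ^ 2 / 4 := by
      have hp := parallelogram_law_with_norm ℝ ((1/2 : ℝ) • u) ((1/2 : ℝ) • v)
      have h1 : (1/2 : ℝ) • u - (1/2 : ℝ) • v = (1/2 : ℝ) • (u - v) := by
        rw [smul_sub]
      have h2 : ‖(1/2 : ℝ) • u‖ ^ 2 = ‖u‖ ^ 2 / 4 := by
        rw [norm_smul]; simp [Real.norm_eq_abs]; ring
      have h3 : ‖(1/2 : ℝ) • v‖ ^ 2 = ‖v‖ ^ 2 / 4 := by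
        rw [norm_smul]; simp [Real.norm_eq_abs]; ring
      have h4 : ‖(1/2 : ℝ) • (u - v)‖ ^ 2 = ‖u - v‖ ^ 2 / 4 := by
        rw [norm_smul]; simp [Real.norm_eq_abs]; ring
      rw [h1] at hp
      rw [h2, h3, h4] at hp
      linarith
    simp only [hg]
    rw [hpar]
    nlinarith [hf]
  -- minimizing sequence
  have hseq : ∀ n : ℕ, ∃ u : H, g u < m + 1 / (n + 1) := by
    intro n
    obtain ⟨b, ⟨u, rfl⟩, hb⟩ := Real.lt_sInf_add_pos hne
      (by positivity : (0:ℝ) < 1 / (n + 1 : ℝ))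
    exact ⟨u, hb⟩
  choose u hu using hseq
  have hdist : ∀ i j : ℕ, ‖u i - u j‖ ^ 2 ≤ 4 / a * (1 / (i + 1) / 2 + 1 / (j + 1) / 2) := by
    intro i j
    have h1 := hkey (u i) (u j)
    have h2 := hmle ((1/2 : ℝ) • u i + (1/2 : ℝ) • u j)
    have h3 := hu i
    have h4 := hu j
    have h5 : a / 4 * ‖u i - u j‖ ^ 2 ≤ 1 / (i + 1) / 2 + 1 / (j + 1) / 2 := by linarith
    have h6 : 4 / a * (a / 4 * ‖u i - u j‖ ^ 2) = ‖u i - u j‖ ^ 2 := by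
      field_simp
    calc ‖u i - u j‖ ^ 2 = 4 / a * (a / 4 * ‖u i - u j‖ ^ 2) := h6.symm
      _ ≤ 4 / a * (1 / (↑i + 1) / 2 + 1 / (↑j + 1) / 2) :=
          mul_le_mul_of_nonneg_left h5 (by positivity)
  have hcauchy : CauchySeq u := by
    rw [Metric.cauchySeq_iff']
    intro ε hε
    obtain ⟨N, hN⟩ := exists_nat_gt (4 / a / ε ^ 2)
    refine ⟨N, fun n hn => ?_⟩
    have hd2 : ‖u n - u N‖ ^ 2 ≤ 4 / a * (1 / (N + 1)) := by
      have := hdist n N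
      have h1 : (1:ℝ) / (n + 1) ≤ 1 / (N + 1) := by
        apply one_div_le_one_div_of_le (by positivity)
        exact_mod_cast by linarith [hn]
      nlinarith [div_pos (by norm_num : (0:ℝ) < 4) ha]
    have hlt : ‖u n - u N‖ ^ 2 < ε ^ 2 := by
      have hN1 : 4 / a / ε ^ 2 < N + 1 := by
        push_cast; linarith [hN]
      have : 4 / a * (1 / (N + 1)) < ε ^ 2 := by
        rw [mul_one_div, div_lt_iff₀ (by positivity : (0:ℝ) < (N:ℝ) + 1)]
        rw [div_lt_iff₀ (by positivity : (0:ℝ) < ε ^ 2)] at hN1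
        linarith
      linarith
    rw [dist_eq_norm]
    nlinarith [norm_nonneg (u n - u N)]
  obtain ⟨y, hy⟩ := cauchySeq_tendsto_of_complete hcauchy
  refine ⟨y, fun z => ?_⟩
  have hgc : Continuous g := by
    apply hfc.add
    exact (continuous_const.mul ((continuous_norm).pow 2))
  have hgy : Filter.Tendsto (g ∘ u) Filter.atTop (nhds (g y)) :=
    (hgc.continuousAt).tendsto.comp hy
  have hgm : Filter.Tendsto (g ∘ u) Filter.atTop (nhds m) := by
    have h1 : Filter.Tendsto (fun n : ℕ => m + 1 / ((n : ℝ) + 1)) Filter.atTop (nhds (m + 0)) :=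
      Filter.Tendsto.const_add m tendsto_one_div_add_atTop_nhds_zero_nat
    rw [add_zero] at h1
    apply tendsto_of_tendsto_of_tendsto_of_le_of_le tendsto_const_nhds h1
    · exact fun n => hmle (u n)
    · exact fun n => le_of_lt (hu n)
  have hym : g y = m := tendsto_nhds_unique hgy hgm
  have hyz : m ≤ f z + a * ‖z‖ ^ 2 := hmle z
  have hym' : f y + a * ‖y‖ ^ 2 = m := hym
  linarith


/-- A convex, smooth, coercive function attains its minimum. -/
lemma bmp_min_exists (f : H → ℝ) (f' : H → H) (hdiff : ∀ z, HasGradientAt f (f' z) z)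
    (L ℓ : ℝ) (hL : 0 < L) (hℓ : 1 < ℓ)
    (hsmooth : ∀ z y : H, f y - f z - ⟪f' z, y - z⟫ ≤ L / ℓ * ‖y - z‖ ^ ℓ)
    (hconv : ConvexOn ℝ Set.univ f)
    (hcoer : ∀ M : ℝ, ∃ R : ℝ, 0 < R ∧ ∀ z : H, R ≤ ‖z‖ → M ≤ f z) :
    ∃ xs : H, ∀ y, f xs ≤ f y := by
  have hfc : Continuous f := continuous_iff_continuousAt.2
    (fun z => (hdiff z).hasFDerivAt.continuousAt)
  obtain ⟨B₀, hB₀⟩ := bmp_bddBelow f f' L ℓ hL hℓ hsmooth hconv hcoer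
  set a : ℕ → ℝ := fun n => 1 / (n + 1) with ha
  have hapos : ∀ n, 0 < a n := fun n => by positivity
  have hmin : ∀ n : ℕ, ∃ y : H, ∀ z : H, f y + a n * ‖y‖ ^ 2 ≤ f z + a n * ‖z‖ ^ 2 :=
    fun n => bmp_strong_min f hfc hconv B₀ hB₀ (a n) (hapos n)
  choose y hy using hmin
  -- norms bounded
  obtain ⟨R₀, hR₀pos, hR₀⟩ := hcoer (f 0 + 1)
  have hfy : ∀ n, f (y n) ≤ f 0 := by
    intro n
    have := hy n 0
    simp only [norm_zero] at this
    nlinarith [hapos n, sq_nonneg ‖y n‖, norm_nonneg (y n)]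
  have hyb : ∀ n, ‖y n‖ < R₀ := by
    intro n
    by_contra hcon
    push_neg at hcon
    have := hR₀ (y n) hcon
    linarith [hfy n]
  -- monotone norms
  set s : ℕ → ℝ := fun n => ‖y n‖ ^ 2 with hs
  have hsmono : Monotone s := by
    apply monotone_nat_of_le_succ
    intro n
    have h1 := hy n (y (n + 1))
    have h2 := hy (n + 1) (y n)
    have han : a (n + 1) < a n := by
      apply one_div_lt_one_div_of_lt (by positivity)
      push_cast; linarith
    simp only [hs]
    nlinarith [han]
  have hsbdd : ∀ n, s n ≤ R₀ ^ 2 := fun n => by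
    have := hyb n
    simp only [hs]
    nlinarith [norm_nonneg (y n)]
  have hslim : ∃ c : ℝ, Filter.Tendsto s Filter.atTop (nhds c) :=
    ⟨⨆ n, s n, tendsto_atTop_ciSup hsmono ⟨R₀ ^ 2, by rintro _ ⟨n, rfl⟩; exact hsbdd n⟩⟩
  obtain ⟨c, hc⟩ := hslim
  have hscauchy : CauchySeq s := hc.cauchySeq
  -- strong optimality inequality
  have hstrong : ∀ n (z : H), f (y n) + a n * ‖y n‖ ^ 2 + a n / 2 * ‖z - y n‖ ^ 2
      ≤ f z + a n * ‖z‖ ^ 2 := by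
    intro n z
    have hf := hconv.2 (Set.mem_univ (y n)) (Set.mem_univ z)
      (by norm_num : (0:ℝ) ≤ 1/2) (by norm_num : (0:ℝ) ≤ 1/2) (by norm_num)
    simp only [smul_eq_mul] at hf
    have hpar : ‖(1/2 : ℝ) • y n + (1/2 : ℝ) • z‖ ^ 2
        = ‖y n‖ ^ 2 / 2 + ‖z‖ ^ 2 / 2 - ‖y n - z‖ ^ 2 / 4 := by
      have hp := parallelogram_law_with_norm ℝ ((1/2 : ℝ) • y n) ((1/2 : ℝ) • z)
      have h1 : (1/2 : ℝ) • y n - (1/2 : ℝ) • z = (1/2 : ℝ) • (y n - z) := by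
        rw [smul_sub]
      rw [h1] at hp
      have h2 : ‖(1/2 : ℝ) • y n‖ ^ 2 = ‖y n‖ ^ 2 / 4 := by
        rw [norm_smul]; simp [Real.norm_eq_abs]; ring
      have h3 : ‖(1/2 : ℝ) • z‖ ^ 2 = ‖z‖ ^ 2 / 4 := by
        rw [norm_smul]; simp [Real.norm_eq_abs]; ring
      have h4 : ‖(1/2 : ℝ) • (y n - z)‖ ^ 2 = ‖y n - z‖ ^ 2 / 4 := by
        rw [norm_smul]; simp [Real.norm_eq_abs]; ring
      rw [h2, h3, h4] at hp
      linarith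
    have hopt := hy n ((1/2 : ℝ) • y n + (1/2 : ℝ) • z)
    rw [hpar] at hopt
    have hnrm : ‖z - y n‖ ^ 2 = ‖y n - z‖ ^ 2 := by
      rw [← norm_neg (z - y n)]; congr 1; abel
    rw [hnrm]
    nlinarith [hf]
  -- Cauchy estimate for y
  have hycauchy : CauchySeq y := by
    rw [Metric.cauchySeq_iff]
    intro ε hε
    obtain ⟨N, hN⟩ := Metric.cauchySeq_iff.1 hscauchy (ε ^ 2 / 2) (by positivity)
    refine ⟨N, fun m hm n hn => ?_⟩
    -- wlog n ≤ m : a m ≤ a n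
    have key : ∀ i j : ℕ, i ≤ j → ‖y j - y i‖ ^ 2 ≤ 2 * (s j - s i) := by
      intro i j hij
      have hai : a j ≤ a i := by
        apply one_div_le_one_div_of_le (by positivity)
        push_cast; exact_mod_cast by exact_mod_cast Nat.add_le_add_right hij 1
      have h1 := hstrong j (y i)  -- a j / 2 * ‖y i - y j‖² ≤ f(y i) + a j ‖y i‖² - f(y j) - a j ‖y j‖²
      have h2 := hstrong i (y j)
      have hnm : ‖y i - y j‖ ^ 2 = ‖y j - y i‖ ^ 2 := by
        rw [← norm_neg (y i - y j)]; congr 1; abel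
      rw [hnm] at h1
      have hsum : (a i + a j) / 2 * ‖y j - y i‖ ^ 2 ≤ (a i - a j) * (s j - s i) := by
        simp only [hs]
        nlinarith [h1, h2]
      have hsij : s i ≤ s j := hsmono hij
      have haij : 0 < a i + a j := by positivity
      have hrhs : (a i - a j) * (s j - s i) ≤ (a i + a j) * (s j - s i) := by
        apply mul_le_mul_of_nonneg_right _ (by linarith)
        linarith [hapos j]
      have h9 := le_trans hsum hrhs
      nlinarith [h9, haij]
    rcases le_total m n with hmn | hmn
    · have := key m n hmn
      have hsd := hN n hn m hm
      rw [Real.dist_eq] at hsd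
      have habs : s n - s m ≤ |s n - s m| := le_abs_self _
      rw [dist_eq_norm]
      have h10 : ‖y n - y m‖ ^ 2 < ε ^ 2 := by nlinarith
      have h11 : ‖y m - y n‖ = ‖y n - y m‖ := by
        rw [← norm_neg (y m - y n)]; congr 1; abel
      rw [h11]
      nlinarith [norm_nonneg (y n - y m)]
    · have := key n m hmn
      have hsd := hN m hm n hn
      rw [Real.dist_eq] at hsd
      have habs : s m - s n ≤ |s m - s n| := le_abs_self _
      rw [dist_eq_norm]
      have h10 : ‖y m - y n‖ ^ 2 < ε ^ 2 := by nlinarith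
      nlinarith [norm_nonneg (y m - y n)]
  obtain ⟨xs, hxs⟩ := cauchySeq_tendsto_of_complete hycauchy
  refine ⟨xs, fun z => ?_⟩
  have h1 : ∀ n, f (y n) ≤ f z + a n * ‖z‖ ^ 2 := by
    intro n
    have := hy n z
    nlinarith [hapos n, sq_nonneg ‖y n‖]
  have h2 : Filter.Tendsto (fun n => f (y n)) Filter.atTop (nhds (f xs)) :=
    (hfc.continuousAt.tendsto.comp hxs)
  have h3 : Filter.Tendsto (fun n : ℕ => f z + a n * ‖z‖ ^ 2) Filter.atTop (nhds (f z)) := by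
    have hat : Filter.Tendsto (fun n : ℕ => a n) Filter.atTop (nhds 0) :=
      tendsto_one_div_add_atTop_nhds_zero_nat
    have h4 := (hat.mul_const (‖z‖ ^ 2)).const_add (f z)
    rw [zero_mul, add_zero] at h4
    exact h4
  exact le_of_tendsto_of_tendsto' h2 h3 h1


/-- Decrease obtained by exact line search along a descent direction `g`
with `⟪f' xt, g⟫ = ‖g‖²`. -/
lemma bmp_con_dec (f : H → ℝ) (f' : H → H) (L ℓ : ℝ) (hL : 0 < L) (hℓ : 1 < ℓ)
    (hsmooth : ∀ z y : H, f y - f z - ⟪f' z, y - z⟫ ≤ L / ℓ * ‖y - z‖ ^ ℓ)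
    (xt g : H) (c b : ℝ) (hc : 0 < c) (hb : 0 < b)
    (hng : c / b ≤ ‖g‖) (hinner : ⟪f' xt, g⟫ = ‖g‖ ^ 2) :
    ∃ γ : ℝ, f (xt - γ • g) ≤
      f xt - (ℓ / (2*L)) ^ (1/(ℓ-1)) / 2 * (1/b) ^ (1/(ℓ-1) + 1) * c ^ (1/(ℓ-1) + 1) := by
  set p : ℝ := 1/(ℓ-1) with hp
  have hppos : 0 < p := by
    rw [hp]
    have h0 : 0 < ℓ - 1 := by linarith
    positivity
  have hpl : p * (ℓ - 1) = 1 := by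
    rw [hp, one_div, inv_mul_cancel₀ (by linarith : ℓ - 1 ≠ 0)]
  set n : ℝ := ‖g‖ with hn
  have hnpos : 0 < n := lt_of_lt_of_le (by positivity) hng
  set γc : ℝ := (ℓ/(2*L)) ^ p * n ^ ((2-ℓ)*p) with hγ
  have hγpos : 0 < γc := by
    apply mul_pos (Real.rpow_pos_of_pos (by positivity) _) (Real.rpow_pos_of_pos hnpos _)
  refine ⟨γc, ?_⟩
  have h1 := hsmooth xt (xt - γc • g)
  have h2 : xt - γc • g - xt = -(γc • g) := by abel
  rw [h2] at h1
  rw [inner_neg_right, real_inner_smul_right, hinner] at h1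
  have h3 : ‖-(γc • g)‖ = γc * n := by
    rw [norm_neg, norm_smul, Real.norm_eq_abs, abs_of_pos hγpos]
  rw [h3] at h1
  -- exact cancellation
  have hγl : γc ^ (ℓ - 1) = ℓ/(2*L) * n ^ (2 - ℓ) := by
    rw [hγ, Real.mul_rpow (Real.rpow_nonneg (by positivity) _) (Real.rpow_nonneg (le_of_lt hnpos) _),
      ← Real.rpow_mul (by positivity : (0:ℝ) ≤ ℓ/(2*L)),
      ← Real.rpow_mul (le_of_lt hnpos), hpl, Real.rpow_one]
    congr 1
    have : (2-ℓ) * p * (ℓ-1) = 2 - ℓ := by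
      calc (2-ℓ) * p * (ℓ-1) = (2-ℓ) * (p * (ℓ-1)) := by ring
        _ = 2 - ℓ := by rw [hpl]; ring
    rw [this]
  have hγℓ : γc ^ ℓ = γc ^ (ℓ-1) * γc := by
    rw [← Real.rpow_add_one (ne_of_gt hγpos) (ℓ-1)]
    norm_num
  have hkey : L / ℓ * (γc * n) ^ ℓ = 1/2 * γc * n ^ (2:ℝ) := by
    rw [Real.mul_rpow (le_of_lt hγpos) (le_of_lt hnpos), hγℓ, hγl]
    have hc1 : L/ℓ * (ℓ/(2*L)) = 1/2 := by
      have hℓ0 : ℓ ≠ 0 := by linarith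
      have hL0 : L ≠ 0 := ne_of_gt hL
      field_simp
    have hc2 : n ^ (2-ℓ) * n ^ ℓ = n ^ (2:ℝ) := by
      rw [← Real.rpow_add hnpos]; norm_num
    calc L/ℓ * (ℓ/(2*L) * n ^ (2-ℓ) * γc * n ^ ℓ)
        = (L/ℓ * (ℓ/(2*L))) * (n ^ (2-ℓ) * n ^ ℓ) * γc := by ring
      _ = 1/2 * γc * n ^ (2:ℝ) := by rw [hc1, hc2]; ring
  have h4 : f (xt - γc • g) ≤ f xt - 1/2 * γc * n ^ (2:ℝ) := by
    have hn2 : n ^ 2 = n ^ (2:ℝ) := by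
      rw [← Real.rpow_natCast n 2]; norm_num
    rw [hn2] at h1
    linarith [h1, hkey.le, hkey.ge]
  -- express the decrease
  have h5 : 1/2 * γc * n ^ (2:ℝ) = (ℓ/(2*L)) ^ p / 2 * n ^ ((2-ℓ)*p + 2) := by
    rw [hγ, Real.rpow_add hnpos]
    ring
  have he : (2-ℓ)*p + 2 = p + 1 := by
    have : (2-ℓ)*p + 2 - (p + 1) = -( (ℓ-1) * p - 1) := by ring
    nlinarith [hpl]
  have h6 : (c/b) ^ (p+1) ≤ n ^ (p+1) :=
    Real.rpow_le_rpow (by positivity) hng (by positivity)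
  have h7 : (c/b) ^ (p+1) = (1/b) ^ (p+1) * c ^ (p+1) := by
    rw [← Real.mul_rpow (by positivity) (le_of_lt hc)]
    congr 1
    field_simp
  have h8 : (ℓ/(2*L)) ^ p / 2 * ((1/b) ^ (p+1) * c ^ (p+1)) ≤ (ℓ/(2*L)) ^ p / 2 * n ^ (p+1) := by
    apply mul_le_mul_of_nonneg_left _ (by positivity)
    rw [← h7]; exact h6
  rw [h5, he] at h4
  calc f (xt - γc • g) ≤ f xt - (ℓ/(2*L)) ^ p / 2 * n ^ (p+1) := h4
    _ ≤ f xt - (ℓ/(2*L)) ^ p / 2 * (1/b) ^ (p+1) * c ^ (p+1) := by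
        rw [mul_assoc]; linarith [h8]

/-- Decrease obtained by exact line search along a dictionary atom. -/
lemma bmp_full_dec (f : H → ℝ) (f' : H → H) (L ℓ : ℝ) (hL : 0 < L) (hℓ : 1 < ℓ)
    (hsmooth : ∀ z y : H, f y - f z - ⟪f' z, y - z⟫ ≤ L / ℓ * ‖y - z‖ ^ ℓ)
    (xt v : H) (c B κ : ℝ) (hc : 0 < c) (hB : 0 < B) (hκ : 1 ≤ κ)
    (hvB : ‖v‖ ≤ B) (hv : ⟪f' xt, v⟫ ≤ -(c/κ)) :
    ∃ γ : ℝ, f (xt + γ • v) ≤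
      f xt - (ℓ / (2*κ*L*B ^ ℓ)) ^ (1/(ℓ-1)) / (2*κ) * c ^ (1/(ℓ-1) + 1) := by
  set p : ℝ := 1/(ℓ-1) with hp
  have hppos : 0 < p := by
    rw [hp]
    have h0 : 0 < ℓ - 1 := by linarith
    positivity
  have hpl : p * (ℓ - 1) = 1 := by
    rw [hp, one_div, inv_mul_cancel₀ (by linarith : ℓ - 1 ≠ 0)]
  have hκpos : 0 < κ := lt_of_lt_of_le one_pos hκ
  have hBℓ : 0 < B ^ ℓ := Real.rpow_pos_of_pos hB ℓ
  set w : ℝ := c * ℓ / (2*κ*L*B ^ ℓ) with hw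
  have hwpos : 0 < w := by rw [hw]; positivity
  set γf : ℝ := w ^ p with hγ
  have hγpos : 0 < γf := Real.rpow_pos_of_pos hwpos p
  refine ⟨γf, ?_⟩
  have h1 := hsmooth xt (xt + γf • v)
  have h2 : xt + γf • v - xt = γf • v := by abel
  rw [h2, real_inner_smul_right] at h1
  have h3 : ‖γf • v‖ = γf * ‖v‖ := by
    rw [norm_smul, Real.norm_eq_abs, abs_of_pos hγpos]
  rw [h3] at h1
  have h4 : (γf * ‖v‖) ^ ℓ ≤ (γf * B) ^ ℓ := by
    apply Real.rpow_le_rpow (by positivity) _ (by linarith)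
    exact mul_le_mul_of_nonneg_left hvB (le_of_lt hγpos)
  have hLl : 0 < L / ℓ := by positivity
  have h5 : f (xt + γf • v) ≤ f xt + γf * (-(c/κ)) + L/ℓ * (γf * B) ^ ℓ := by
    have := mul_le_mul_of_nonneg_left hv (le_of_lt hγpos)
    nlinarith [mul_le_mul_of_nonneg_left h4 (le_of_lt hLl)]
  -- exact cancellation
  have hγl : γf ^ (ℓ - 1) = w := by
    rw [hγ, ← Real.rpow_mul (le_of_lt hwpos), hpl, Real.rpow_one]
  have hkey : L/ℓ * (γf * B) ^ ℓ = γf * (c / (2*κ)) := by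
    rw [Real.mul_rpow (le_of_lt hγpos) (le_of_lt hB)]
    have hγℓ : γf ^ ℓ = γf ^ (ℓ-1) * γf := by
      rw [← Real.rpow_add_one (ne_of_gt hγpos) (ℓ-1)]
      norm_num
    rw [hγℓ, hγl, hw]
    have hℓ0 : ℓ ≠ 0 := by linarith
    have hc3 : L/ℓ * (c * ℓ/(2*κ*L*B ^ ℓ)) * B ^ ℓ = c/(2*κ) := by
      field_simp
    calc L/ℓ * (c * ℓ/(2*κ*L*B ^ ℓ) * γf * B ^ ℓ)
        = (L/ℓ * (c * ℓ/(2*κ*L*B ^ ℓ)) * B ^ ℓ) * γf := by ring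
      _ = γf * (c/(2*κ)) := by rw [hc3]; ring
  have h6 : f (xt + γf • v) ≤ f xt - γf * (c/(2*κ)) := by
    rw [hkey] at h5
    have hcc : γf * (-(c/κ)) + γf * (c/(2*κ)) = -(γf * (c/(2*κ))) := by
      field_simp
      ring
    linarith [h5]
  -- express the decrease
  have h7 : γf * (c/(2*κ)) = (ℓ/(2*κ*L*B ^ ℓ)) ^ p / (2*κ) * c ^ (p+1) := by
    rw [hγ, hw]
    have hsplit : c * ℓ / (2*κ*L*B ^ ℓ) = c * (ℓ / (2*κ*L*B ^ ℓ)) := by ring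
    rw [hsplit, Real.mul_rpow (le_of_lt hc) (by positivity)]
    rw [Real.rpow_add hc, Real.rpow_one]
    ring
  rw [h7] at h6
  exact h6

end aux

/-- A BMP trace with parameters `(κ, η, τ)` for the objective `f` (with gradient `f'`) and
dictionary `D`: sequences of iterates `x` and dual gap estimates `φ` such that `φ 0 ≤ 0`,
`⟪∇f (x 0), z⟫ ≥ τ φ 0` on `conv (D ∪ -D)`, and each step is a constrained step, a dual step,
or a full step. -/
def IsBMPTrace {H : Type*} [NormedAddCommGroup H] [InnerProductSpace ℝ H]
    (f : H → ℝ) (f' : H → H) (D : Set H) (κ η τ : ℝ)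
    (x : ℕ → H) (φ : ℕ → ℝ) : Prop :=
  φ 0 ≤ 0 ∧
  (∀ z ∈ convexHull ℝ (D ∪ -D), τ * φ 0 ≤ ⟪f' (x 0), z⟫) ∧
  ∀ t : ℕ,
    -- constrained step
    (∃ (S : Finset H) (g : H), ↑S ⊆ D ∪ -D ∧
      (∃ v ∈ S, ⟪f' (x t), v⟫ ≤ φ t / η) ∧
      g ∈ Submodule.span ℝ (S : Set H) ∧
      (∀ w ∈ Submodule.span ℝ (S : Set H), ⟪g, w⟫ = ⟪f' (x t), w⟫) ∧
      (∃ γ : ℝ, x (t + 1) = x t - γ • g ∧ ∀ γ' : ℝ, f (x (t + 1)) ≤ f (x t - γ' • g)) ∧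
      φ (t + 1) = φ t) ∨
    -- dual step
    ((∀ z ∈ convexHull ℝ (D ∪ -D), φ t ≤ ⟪f' (x t), z⟫) ∧
      x (t + 1) = x t ∧ φ (t + 1) = φ t / τ) ∨
    -- full step
    (∃ v ∈ D ∪ -D, ⟪f' (x t), v⟫ ≤ φ t / κ ∧
      (∃ γ : ℝ, x (t + 1) = x t + γ • v ∧ ∀ γ' : ℝ, f (x (t + 1)) ≤ f (x t + γ' • v)) ∧
      φ (t + 1) = φ t)

set_option maxHeartbeats 3000000 in
/-- Sublinear convergence of BMP for `L`-smooth (order `ℓ > 1`), convex, coercive objectives: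
`f` attains its minimum, and there is `A > 0` such that for every `ε > 0`, every iterate with
index `t ≥ A (1 + ε^(-1/(ℓ-1)))` satisfies `f (x t) - min f ≤ ε`. -/
theorem stmt_18
    {H : Type*} [NormedAddCommGroup H] [InnerProductSpace ℝ H] [CompleteSpace H]
    (D : Set H) (hDne : D.Nonempty) (hDbdd : Bornology.IsBounded D)
    (r : ℝ) (hr : 0 < r) (hball : Metric.ball (0 : H) r ⊆ convexHull ℝ (D ∪ -D))
    (f : H → ℝ) (f' : H → H) (hdiff : ∀ z, HasGradientAt f (f' z) z)
    (L ℓ : ℝ) (hL : 0 < L) (hℓ : 1 < ℓ)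
    (hsmooth : ∀ z y : H, f y - f z - ⟪f' z, y - z⟫ ≤ L / ℓ * ‖y - z‖ ^ ℓ)
    (hconv : ConvexOn ℝ Set.univ f)
    (hcoer : ∀ M : ℝ, ∃ R : ℝ, 0 < R ∧ ∀ z : H, R ≤ ‖z‖ → M ≤ f z)
    (κ η τ : ℝ) (hκ : 1 ≤ κ) (hη : 0 < η) (hτ : 1 < τ)
    (x : ℕ → H) (φ : ℕ → ℝ) (htrace : IsBMPTrace f f' D κ η τ x φ) :
    ∃ xs : H, (∀ y, f xs ≤ f y) ∧
      ∃ A : ℝ, 0 < A ∧ ∀ ε : ℝ, 0 < ε → ∀ t : ℕ,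
        A * (1 + ε ^ (-(1 / (ℓ - 1)))) ≤ (t : ℝ) → f (x t) - f xs ≤ ε := by
  obtain ⟨hφ0, hinit, hstep⟩ := htrace
  obtain ⟨xs, hxs⟩ := bmp_min_exists f f' hdiff L ℓ hL hℓ hsmooth hconv hcoer
  refine ⟨xs, hxs, ?_⟩
  have hl1 : (0:ℝ) < ℓ - 1 := by linarith
  set p : ℝ := 1 / (ℓ - 1) with hp
  have hppos : 0 < p := by rw [hp]; positivity
  have hτpos : (0:ℝ) < τ := by linarith
  -- monotonicity of f along the trace
  have hmono1 : ∀ t, f (x (t + 1)) ≤ f (x t) := by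
    intro t
    rcases hstep t with ⟨S, g, _, _, _, _, ⟨γ, hxeq, hls⟩, _⟩ | ⟨_, hxeq, _⟩ |
      ⟨v, _, _, ⟨γ, hxeq, hls⟩, _⟩
    · simpa using hls 0
    · rw [hxeq]
    · simpa using hls 0
  have hmono : ∀ s t : ℕ, s ≤ t → f (x t) ≤ f (x s) := by
    intro s t hst
    induction t, hst using Nat.le_induction with
    | base => exact le_refl _
    | succ t hst ih => exact le_trans (hmono1 t) ih
  -- dictionary bound
  obtain ⟨B₁, hB₁⟩ := isBounded_iff_forall_norm_le.1 hDbdd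
  set B : ℝ := max B₁ 1 with hB
  have hBpos : (0:ℝ) < B := lt_of_lt_of_le one_pos (le_max_right _ _)
  have hBd : ∀ v ∈ D ∪ -D, ‖v‖ ≤ B := by
    intro v hv
    rcases hv with hv | hv
    · exact le_trans (hB₁ v hv) (le_max_left _ _)
    · rw [← norm_neg]
      exact le_trans (hB₁ (-v) (Set.mem_neg.1 hv)) (le_max_left _ _)
  -- bound on iterates
  obtain ⟨R₁, hR₁pos, hR₁⟩ := hcoer (f (x 0) + 1)
  set M : ℝ := R₁ + ‖xs‖ with hM
  have hMpos : 0 < M := add_pos_of_pos_of_nonneg hR₁pos (norm_nonneg xs)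
  have hxtb : ∀ t, ‖x t - xs‖ ≤ M := by
    intro t
    have hft : f (x t) ≤ f (x 0) := hmono 0 t (Nat.zero_le t)
    have hxt : ‖x t‖ < R₁ := by
      by_contra hcon
      push_neg at hcon
      linarith [hR₁ (x t) hcon]
    calc ‖x t - xs‖ ≤ ‖x t‖ + ‖xs‖ := norm_sub_le _ _
      _ ≤ M := by rw [hM]; linarith
  -- dual certificate implies gap bound
  have hgap : ∀ (t : ℕ) (c : ℝ), (∀ z ∈ convexHull ℝ (D ∪ -D), c ≤ ⟪f' (x t), z⟫) →
      f (x t) - f xs ≤ M * (-c) / (r / 2) := by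
    intro t c hc
    have hnorm := bmp_dual_norm hr hball (f' (x t)) c hc
    have hcg := bmp_conv_grad f f' hdiff hconv (x t) xs
    have h2 : f (x t) - f xs ≤ ⟪f' (x t), x t - xs⟫ := by
      have : xs - x t = -(x t - xs) := by abel
      rw [this, inner_neg_right] at hcg
      linarith
    have h3 : ⟪f' (x t), x t - xs⟫ ≤ ‖f' (x t)‖ * ‖x t - xs‖ := real_inner_le_norm _ _
    have h4 : ‖f' (x t)‖ * ‖x t - xs‖ ≤ ‖f' (x t)‖ * M :=
      mul_le_mul_of_nonneg_left (hxtb t) (norm_nonneg _)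
    have h5 : ‖f' (x t)‖ ≤ -c / (r / 2) := by
      rw [le_div_iff₀ (by positivity : (0:ℝ) < r / 2)]
      linarith [hnorm]
    have h6 : ‖f' (x t)‖ * M ≤ -c / (r / 2) * M :=
      mul_le_mul_of_nonneg_right h5 (le_of_lt hMpos)
    calc f (x t) - f xs ≤ ‖f' (x t)‖ * M := by linarith
      _ = M * ‖f' (x t)‖ := by ring
      _ ≤ M * (-c) / (r / 2) := by
          rw [mul_comm (-c/(r/2)) M] at h6
          have h7 : M * (-c/(r/2)) = M * (-c)/(r/2) := by ring
          linarith [h6]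
  rcases eq_or_lt_of_le hφ0 with hφ00 | hφ0neg
  · -- φ 0 = 0 : x 0 is already optimal
    refine ⟨1, one_pos, fun ε hε t _ => ?_⟩
    have hcert : ∀ z ∈ convexHull ℝ (D ∪ -D), (0:ℝ) ≤ ⟪f' (x 0), z⟫ := by
      intro z hz
      have := hinit z hz
      rw [hφ00, mul_zero] at this
      exact this
    have h0 := hgap 0 0 hcert
    have h1 : f (x 0) ≤ f xs + 0 := by
      rw [neg_zero] at h0
      have : M * 0 / (r/2) = 0 := by ring
      rw [this] at h0
      linarith
    have h2 : f (x t) ≤ f (x 0) := hmono 0 t (Nat.zero_le t)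
    linarith
  · -- φ 0 < 0 : main case
    have hφneg : ∀ t, φ t < 0 := by
      intro t
      induction t with
      | zero => exact hφ0neg
      | succ t ih =>
        rcases hstep t with ⟨_, _, _, _, _, _, _, hφeq⟩ | ⟨_, _, hφeq⟩ | ⟨_, _, _, _, hφeq⟩
        · rw [hφeq]; exact ih
        · rw [hφeq]; exact div_neg_of_neg_of_pos ih hτpos
        · rw [hφeq]; exact ih
    -- per-step decrease constants
    set Cf : ℝ := (ℓ / (2*κ*L*B ^ ℓ)) ^ p / (2*κ) with hCf
    set Cc : ℝ := (ℓ / (2*L)) ^ p / 2 * (1/(η*B)) ^ (p+1) with hCc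
    set C : ℝ := min Cf Cc with hC
    have hκpos : (0:ℝ) < κ := lt_of_lt_of_le one_pos hκ
    have hBℓpos : (0:ℝ) < B ^ ℓ := Real.rpow_pos_of_pos hBpos ℓ
    have hCfpos : 0 < Cf := by
      rw [hCf]
      have h1 : (0:ℝ) < ℓ / (2*κ*L*B ^ ℓ) := by positivity
      positivity
    have hCcpos : 0 < Cc := by
      rw [hCc]
      have h1 : (0:ℝ) < ℓ / (2*L) := by positivity
      have h2 : (0:ℝ) < 1/(η*B) := by positivity
      positivity
    have hCpos : 0 < C := lt_min hCfpos hCcpos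
    -- the key step dichotomy
    have hstepkey : ∀ t, φ (t+1) = φ t / τ ∨
        (φ (t+1) = φ t ∧ f (x (t+1)) ≤ f (x t) - C * (-φ t) ^ (p+1)) := by
      intro t
      have hφt := hφneg t
      set c : ℝ := -φ t with hc
      have hcpos : 0 < c := by rw [hc]; linarith
      have hcpow : (0:ℝ) ≤ c ^ (p+1) := Real.rpow_nonneg (le_of_lt hcpos) _
      rcases hstep t with ⟨S, g, hSsub, ⟨v, hvS, hv⟩, hgspan, hgproj, ⟨γ, hxeq, hls⟩, hφeq⟩ |
        ⟨_, _, hφeq⟩ | ⟨v, hvD, hv, ⟨γ, hxeq, hls⟩, hφeq⟩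
      · right
        refine ⟨hφeq, ?_⟩
        have hvD : v ∈ D ∪ -D := hSsub (Finset.mem_coe.2 hvS)
        have hvB : ‖v‖ ≤ B := hBd v hvD
        have hgveq : ⟪g, v⟫ = ⟪f' (x t), v⟫ :=
          hgproj v (Submodule.subset_span (Finset.mem_coe.2 hvS))
        have hgv : ⟪g, v⟫ ≤ -(c/η) := by
          rw [hgveq]
          have : φ t / η = -(c/η) := by rw [hc]; ring
          linarith [hv, this.le, this.ge]
        have hng : c/(η*B) ≤ ‖g‖ := by
          have h1 : c/η ≤ ‖g‖ * B := by
            have habs : |⟪g, v⟫| ≤ ‖g‖ * ‖v‖ := abs_real_inner_le_norm g v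
            have h2 : c/η ≤ -⟪g, v⟫ := by linarith [hgv]
            have h3 : -⟪g, v⟫ ≤ |⟪g, v⟫| := neg_le_abs _
            have h4 : ‖g‖ * ‖v‖ ≤ ‖g‖ * B := mul_le_mul_of_nonneg_left hvB (norm_nonneg g)
            linarith
          rw [← div_div, div_le_iff₀ hBpos]
          exact h1
        have hinner : ⟪f' (x t), g⟫ = ‖g‖ ^ 2 := by
          rw [← hgproj g hgspan]
          exact real_inner_self_eq_norm_sq g
        obtain ⟨γ₂, hdec⟩ := bmp_con_dec f f' L ℓ hL hℓ hsmooth (x t) g c (η*B)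
          hcpos (by positivity) hng hinner
        rw [← hp] at hdec
        have h5 := le_trans (hls γ₂) hdec
        have h6 : C * c ^ (p+1) ≤ (ℓ/(2*L)) ^ p / 2 * (1/(η*B)) ^ (p+1) * c ^ (p+1) := by
          apply mul_le_mul_of_nonneg_right _ hcpow
          rw [hC, hCc]
          exact min_le_right _ _
        rw [hc] at h6 ⊢
        linarith
      · left
        exact hφeq
      · right
        refine ⟨hφeq, ?_⟩
        have hvB : ‖v‖ ≤ B := hBd v hvD
        have hv' : ⟪f' (x t), v⟫ ≤ -(c/κ) := by
          have : φ t / κ = -(c/κ) := by rw [hc]; ring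
          linarith [hv, this.le, this.ge]
        obtain ⟨γ₂, hdec⟩ := bmp_full_dec f f' L ℓ hL hℓ hsmooth (x t) v c B κ
          hcpos hBpos hκ hvB hv'
        rw [← hp] at hdec
        have h5 := le_trans (hls γ₂) hdec
        have h6 : C * c ^ (p+1) ≤ (ℓ/(2*κ*L*B ^ ℓ)) ^ p / (2*κ) * c ^ (p+1) := by
          apply mul_le_mul_of_nonneg_right _ hcpow
          rw [hC, hCf]
          exact min_le_left _ _
        rw [hc] at h6 ⊢
        linarith
    -- the invariant
    set G : ℝ := M * τ / (r/2) with hG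
    have hGpos : 0 < G := by rw [hG]; positivity
    have hinv : ∀ t, f (x t) - f xs ≤ G * (-φ t) := by
      intro t
      induction t with
      | zero =>
        have h0 := hgap 0 (τ * φ 0) hinit
        have : M * (-(τ * φ 0)) / (r/2) = G * (-φ 0) := by rw [hG]; ring
        linarith [h0, this.le, this.ge]
      | succ t ih =>
        rcases hstep t with ⟨_, _, _, _, _, _, ⟨γ, hxeq, hls⟩, hφeq⟩ |
          ⟨hcert, hxeq, hφeq⟩ | ⟨_, _, _, ⟨γ, hxeq, hls⟩, hφeq⟩
        · rw [hφeq]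
          linarith [hmono1 t]
        · have h0 := hgap t (φ t) hcert
          rw [hxeq, hφeq]
          have : M * (-φ t) / (r/2) = G * (-(φ t / τ)) := by
            rw [hG]
            field_simp
          linarith [h0, this.le, this.ge]
        · rw [hφeq]
          linarith [hmono1 t]
    clear_value B M Cf Cc C G
    -- sub-lemma: from any time, a dual step happens quickly
    have hD : ∀ T : ℕ, ∃ S : ℕ, φ S = φ T / τ ∧
        (S:ℝ) ≤ (T:ℝ) + 1 + G / C * (-φ T) ^ (-p) := by
      intro T
      set c : ℝ := -φ T with hc
      have hcpos : 0 < c := by rw [hc]; linarith [hφneg T]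
      have hprod : G / C * c ^ (-p) * (C * c ^ (p+1)) = G * c := by
        rw [show G / C * c ^ (-p) * (C * c ^ (p+1))
            = G / C * C * (c ^ (-p) * c ^ (p+1)) from by ring,
          ← Real.rpow_add hcpos]
        have h1 : -p + (p+1) = 1 := by ring
        rw [h1, Real.rpow_one, div_mul_cancel₀ _ (ne_of_gt hCpos)]
      have hCc : 0 < C * c ^ (p+1) := mul_pos hCpos (Real.rpow_pos_of_pos hcpos _)
      set N : ℕ := ⌈G / C * c ^ (-p)⌉₊ with hN
      have hchain : ∀ j : ℕ, (∀ i, i < j → ¬ (φ (T+i+1) = φ (T+i) / τ)) →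
          φ (T + j) = φ T ∧ f (x (T+j)) ≤ f (x T) - j * (C * c ^ (p+1)) := by
        intro j
        induction j with
        | zero => intro _; simp
        | succ j ih =>
          intro h
          obtain ⟨hφc, hfc⟩ := ih (fun i hi => h i (Nat.lt_succ_of_lt hi))
          rcases hstepkey (T+j) with hdual | ⟨hkeep, hdec⟩
          · exact absurd hdual (h j (Nat.lt_succ_self j))
          · constructor
            · rw [show T + (j+1) = T + j + 1 from rfl, hkeep, hφc]
            · rw [show T + (j+1) = T + j + 1 from rfl]
              rw [hφc] at hdec
              rw [← hc] at hdec
              push_cast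
              push_cast at hfc
              linarith
      have hex : ∃ j, j ≤ N ∧ φ (T+j+1) = φ (T+j) / τ := by
        by_contra hcon
        push_neg at hcon
        obtain ⟨hφc, hfc⟩ := hchain (N+1) (fun i hi => hcon i (by omega))
        have hub := hinv T
        rw [← hc] at hub
        have hNlb : G / C * c ^ (-p) ≤ (N:ℝ) := Nat.le_ceil _
        have h2 : G * c < ((N:ℝ)+1) * (C * c ^ (p+1)) := by
          calc G * c = G / C * c ^ (-p) * (C * c ^ (p+1)) := hprod.symm
            _ ≤ (N:ℝ) * (C * c ^ (p+1)) := mul_le_mul_of_nonneg_right hNlb (le_of_lt hCc)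
            _ < ((N:ℝ)+1) * (C * c ^ (p+1)) := by nlinarith [hCc]
        have h3 := hxs (x (T+(N+1)))
        push_cast at hfc
        linarith
      obtain ⟨hj₀N, hj₀dual⟩ := Nat.find_spec hex
      have hminim : ∀ i, i < Nat.find hex → ¬ (φ (T+i+1) = φ (T+i) / τ) := by
        intro i hi hdual
        exact (Nat.find_min hex hi) ⟨by omega, hdual⟩
      obtain ⟨hφc, hfd⟩ := hchain (Nat.find hex) hminim
      refine ⟨T + Nat.find hex + 1, ?_, ?_⟩
      · rw [hj₀dual, hφc]
      · have hub := hinv T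
        rw [← hc] at hub
        have h3 := hxs (x (T + Nat.find hex))
        have hstep1 : (Nat.find hex : ℝ) * (C * c ^ (p+1)) ≤ f (x T) - f (x (T + Nat.find hex)) := by
          linarith [hfd]
        have hstep2 : f (x T) - f (x (T + Nat.find hex)) ≤ f (x T) - f xs := by
          linarith [h3]
        have h1 : (Nat.find hex : ℝ) * (C * c ^ (p+1)) ≤ G * c :=
          le_trans hstep1 (le_trans hstep2 hub)
        have h2 : (Nat.find hex : ℝ) ≤ G / C * c ^ (-p) := by
          by_contra hcon2
          push_neg at hcon2
          have h4 := mul_lt_mul_of_pos_right hcon2 hCc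
          rw [hprod] at h4
          linarith
        push_cast
        linarith
    -- geometric setup
    set q : ℝ := τ ^ p with hq
    have hqgt1 : 1 < q := by
      rw [hq]
      exact (Real.one_lt_rpow_iff_of_pos hτpos).2 (Or.inl ⟨hτ, hppos⟩)
    have hq1 : 0 < q - 1 := by linarith
    set c₀ : ℝ := -φ 0 with hc₀
    have hc₀pos : 0 < c₀ := by rw [hc₀]; linarith
    have hqpow : ∀ k : ℕ, ((τ:ℝ) ^ k) ^ p = q ^ k := by
      intro k
      rw [← Real.rpow_natCast τ k, ← Real.rpow_mul (le_of_lt hτpos),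
        ← Real.rpow_natCast q k, hq, ← Real.rpow_mul (le_of_lt hτpos), mul_comm]
    -- the recursion: reaching φ 0 / τ^k
    have hrec : ∀ k : ℕ, ∃ T : ℕ, φ T = φ 0 / τ ^ k ∧
        (T:ℝ) ≤ (k:ℝ) + G / C * c₀ ^ (-p) * ((q ^ k - 1) / (q - 1)) := by
      intro k
      induction k with
      | zero =>
        refine ⟨0, by rw [pow_zero, div_one], ?_⟩
        rw [pow_zero]
        norm_num
      | succ k ih =>
        obtain ⟨T, hT1, hT2⟩ := ih
        obtain ⟨S, hS1, hS2⟩ := hD T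
        have hτk : (0:ℝ) < τ ^ k := pow_pos hτpos k
        have hφT : -φ T = c₀ / τ ^ k := by rw [hT1, hc₀]; ring
        have hpow : (c₀ / τ ^ k) ^ (-p) = c₀ ^ (-p) * q ^ k := by
          rw [Real.div_rpow (le_of_lt hc₀pos) (le_of_lt hτk),
            Real.rpow_neg (le_of_lt hτk), div_eq_mul_inv, inv_inv, hqpow k]
        refine ⟨S, ?_, ?_⟩
        · rw [hS1, hT1, div_div, ← pow_succ]
        · rw [hφT, hpow] at hS2
          have hgeo : (q^k - 1)/(q-1) + q^k = (q^(k+1) - 1)/(q-1) := by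
            rw [div_add' _ _ _ (ne_of_gt hq1)]
            congr 1
            ring
          have hGC : (0:ℝ) ≤ G/C * c₀ ^ (-p) :=
            le_of_lt (mul_pos (div_pos hGpos hCpos) (Real.rpow_pos_of_pos hc₀pos _))
          push_cast
          calc (S:ℝ) ≤ (T:ℝ) + 1 + G/C * (c₀ ^ (-p) * q ^ k) := hS2
            _ ≤ ((k:ℝ) + G/C * c₀ ^ (-p) * ((q^k - 1)/(q-1))) + 1
                + G/C * (c₀ ^ (-p) * q ^ k) := by linarith [hT2]
            _ = ((k:ℝ) + 1) + G/C * c₀ ^ (-p) * ((q^k - 1)/(q-1) + q^k) := by ring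
            _ = ((k:ℝ) + 1) + G/C * c₀ ^ (-p) * ((q^(k+1) - 1)/(q-1)) := by rw [hgeo]
    -- final constant
    clear_value q c₀
    set R₂ : ℝ := G / C * c₀ ^ (-p) with hR₂
    have hR₂pos : 0 < R₂ := by
      rw [hR₂]
      exact mul_pos (div_pos hGpos hCpos) (Real.rpow_pos_of_pos hc₀pos _)
    set mx : ℝ := max 1 ((G * c₀) ^ p) with hmx
    have hmx1 : (1:ℝ) ≤ mx := le_max_left _ _
    have hmx2 : (G * c₀) ^ p ≤ mx := le_max_right _ _
    clear_value R₂ mx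
    set A : ℝ := (1 + R₂) / (q - 1) * q * mx with hA
    have hApos : 0 < A := by
      rw [hA]
      have h0 : (0:ℝ) < q := lt_trans one_pos hqgt1
      have h1 : (0:ℝ) < mx := lt_of_lt_of_le one_pos hmx1
      have h2 : (0:ℝ) < 1 + R₂ := by linarith [hR₂pos]
      exact mul_pos (mul_pos (div_pos h2 hq1) h0) h1
    clear_value A
    refine ⟨A, hApos, fun ε hε t ht => ?_⟩
    set u : ℝ := G * c₀ / ε with hu
    have hGc₀ : 0 < G * c₀ := mul_pos hGpos hc₀pos
    have hupos : 0 < u := by rw [hu]; exact div_pos hGc₀ hε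
    clear_value u
    set K : ℕ := ⌈Real.logb τ u⌉₊ with hK
    have hKceil : Real.logb τ u ≤ (K:ℝ) := Nat.le_ceil _
    have hKzero : Real.logb τ u ≤ 0 → K = 0 := fun h => Nat.ceil_eq_zero.2 h
    have hKlt : 0 ≤ Real.logb τ u → (K:ℝ) < Real.logb τ u + 1 :=
      fun h => Nat.ceil_lt_add_one h
    clear_value K
    have huK : u ≤ τ ^ K := by
      have h1 : Real.logb τ u ≤ (K:ℝ) := hKceil
      calc u = τ ^ Real.logb τ u := (Real.rpow_logb hτpos (ne_of_gt hτ) hupos).symm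
        _ ≤ τ ^ ((K:ℝ)) := (Real.rpow_le_rpow_left_iff hτ).2 h1
        _ = τ ^ K := Real.rpow_natCast τ K
    have hKτ : (τ:ℝ) ^ K ≤ τ * max 1 u := by
      rcases le_or_gt (Real.logb τ u) 0 with hlb | hlb
      · rw [hKzero hlb, pow_zero]
        have h2 : (1:ℝ) ≤ max 1 u := le_max_left _ _
        calc (1:ℝ) = 1 * 1 := by norm_num
          _ ≤ τ * max 1 u := mul_le_mul (le_of_lt hτ) h2 (by norm_num) (le_of_lt hτpos)
      · have h2 : (K:ℝ) < Real.logb τ u + 1 := hKlt (le_of_lt hlb)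
        calc (τ:ℝ) ^ K = τ ^ ((K:ℝ)) := (Real.rpow_natCast τ K).symm
          _ ≤ τ ^ (Real.logb τ u + 1) := (Real.rpow_le_rpow_left_iff hτ).2 (le_of_lt h2)
          _ = τ ^ (Real.logb τ u) * τ := by rw [Real.rpow_add hτpos, Real.rpow_one]
          _ = u * τ := by rw [Real.rpow_logb hτpos (ne_of_gt hτ) hupos]
          _ ≤ max 1 u * τ := mul_le_mul_of_nonneg_right (le_max_right _ _) (le_of_lt hτpos)
          _ = τ * max 1 u := by ring
    obtain ⟨T, hT1, hT2⟩ := hrec K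
    -- bound on T
    have hεp : (0:ℝ) ≤ ε ^ (-p) := Real.rpow_nonneg (le_of_lt hε) _
    have hmaxp : (max 1 u) ^ p ≤ mx * (1 + ε ^ (-p)) := by
      rcases le_total u 1 with hu1 | hu1
      · rw [max_eq_left hu1, Real.one_rpow]
        calc (1:ℝ) = 1 * 1 := by norm_num
          _ ≤ mx * (1 + ε ^ (-p)) :=
            mul_le_mul hmx1 (by linarith [hεp]) (by norm_num) (by linarith [hmx1])
      · rw [max_eq_right hu1]
        have hup : u ^ p = (G * c₀) ^ p * ε ^ (-p) := by
          rw [hu, Real.div_rpow (le_of_lt hGc₀) (le_of_lt hε),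
            Real.rpow_neg (le_of_lt hε), div_eq_mul_inv]
        rw [hup]
        calc (G * c₀) ^ p * ε ^ (-p) ≤ mx * ε ^ (-p) :=
              mul_le_mul_of_nonneg_right hmx2 hεp
          _ ≤ mx * (1 + ε ^ (-p)) :=
              mul_le_mul_of_nonneg_left (by linarith) (by linarith [hmx1])
    have hqK : (q:ℝ) ^ K ≤ q * (mx * (1 + ε ^ (-p))) := by
      have h4 : (q:ℝ) ^ K = ((τ:ℝ) ^ K) ^ p := (hqpow K).symm
      rw [h4]
      calc ((τ:ℝ) ^ K) ^ p ≤ (τ * max 1 u) ^ p :=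
            Real.rpow_le_rpow (le_of_lt (pow_pos hτpos K)) hKτ (le_of_lt hppos)
        _ = τ ^ p * (max 1 u) ^ p := Real.mul_rpow (le_of_lt hτpos)
            (le_trans zero_le_one (le_max_left _ _))
        _ = q * (max 1 u) ^ p := by rw [hq]
        _ ≤ q * (mx * (1 + ε ^ (-p))) :=
            mul_le_mul_of_nonneg_left hmaxp (by linarith)
    have hberno : (K:ℝ) ≤ (q ^ K - 1) / (q - 1) := by
      have h4 := one_add_mul_le_pow (by linarith : (-2:ℝ) ≤ q - 1) K
      rw [show (1:ℝ) + (q - 1) = q from by ring] at h4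
      rw [le_div_iff₀ hq1]
      linarith [h4]
    have hTbound : (T:ℝ) ≤ A * (1 + ε ^ (-p)) := by
      have hs0 : (0:ℝ) ≤ (q ^ K - 1) / (q - 1) := le_trans (Nat.cast_nonneg K) hberno
      have hT2' := hT2
      have h5 : (T:ℝ) ≤ (1 + R₂) * ((q ^ K - 1) / (q - 1)) := by
        have hr1 : (1 + R₂) * ((q ^ K - 1)/(q - 1))
            = (q ^ K - 1)/(q - 1) + R₂ * ((q ^ K - 1)/(q - 1)) := by ring
        linarith [hberno, hT2', hr1.le, hr1.ge]
      have h12pos : (0:ℝ) < (1 + R₂) / (q - 1) := div_pos (by linarith) hq1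
      have h6 : (1 + R₂) * ((q ^ K - 1) / (q - 1)) ≤ (1 + R₂) / (q - 1) * q ^ K := by
        have hdiffeq : (1 + R₂)/(q - 1) * q ^ K - (1 + R₂) * ((q ^ K - 1)/(q - 1))
            = (1 + R₂)/(q - 1) := by
          field_simp
          ring
        linarith [hdiffeq.le, hdiffeq.ge, h12pos]
      have h7 : (1 + R₂)/(q - 1) * q ^ K ≤ (1 + R₂)/(q - 1) * (q * (mx * (1 + ε ^ (-p)))) :=
        mul_le_mul_of_nonneg_left hqK (le_of_lt h12pos)
      have h8 : (1 + R₂)/(q - 1) * (q * (mx * (1 + ε ^ (-p)))) = A * (1 + ε ^ (-p)) := by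
        rw [hA]
        ring
      linarith
    have hTt : T ≤ t := by
      have : (T:ℝ) ≤ (t:ℝ) := le_trans hTbound ht
      exact_mod_cast this
    have h7 : f (x t) ≤ f (x T) := hmono T t hTt
    have h8 := hinv T
    have h9 : -φ T = c₀ / τ ^ K := by rw [hT1, hc₀]; ring
    rw [h9] at h8
    have h10 : G * (c₀ / τ ^ K) ≤ ε := by
      have h11 : G * c₀ / τ ^ K ≤ G * c₀ / u :=
        div_le_div_of_nonneg_left (by positivity) hupos huK
      have h12 : G * c₀ / u = ε := by
        rw [hu]
        field_simp
      have h13 : G * (c₀ / τ ^ K) = G * c₀ / τ ^ K := by ring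
      linarith [h11, h12.le, h13.le, h13.ge, h12.ge]
    linarith
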